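/- Let q : ℝⁿ → ℝⁿ be q(x₁,…,xₙ) = (x₁²,…,xₙ²), r > 0, I_r = (−r,r)ⁿ, and Q_r = q(I_r). If f : Q_r → ℝ is a function such that f ∘ q : I_r → ℝ is real analytic, then there exists a real analytic function F defined on an open neighborhood U of 0 in ℝⁿ such that F = f on U ∩ Q_r. -/

import Mathlib

open Topology

noncomputable section Stmt5Aux
open Finset
open scoped ENNReal NNReal

variable {n : ℕ}

/-- number of occurrences of `i` among the values of `D`. -/
def cnt {m : ℕ} (D : Fin m → Fin n) (i : Fin n) : ℕ :=
  (Finset.univ.filter fun j => D j = i).card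

lemma sum_cnt {m : ℕ} (D : Fin m → Fin n) : ∑ i, cnt D i = m := by
  classical
  have := Finset.card_eq_sum_card_fiberwise (f := D) (s := Finset.univ) (t := Finset.univ)
    (fun x _ => Finset.mem_univ _)
  simpa [cnt] using this.symm

lemma prod_cnt {m : ℕ} (v : Fin n → ℝ) (D : Fin m → Fin n) :
    ∏ j, v (D j) = ∏ i, v i ^ cnt D i := by
  classical
  rw [← Finset.prod_fiberwise_of_maps_to (g := D) (t := Finset.univ)
      (fun x _ => Finset.mem_univ _) (fun j => v (D j))]
  refine Finset.prod_congr rfl fun i _ => ?_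
  rw [Finset.prod_congr rfl (g := fun _ => v i) (fun j hj => by
      rw [(Finset.mem_filter.1 hj).2]), Finset.prod_const, cnt]

lemma exists_cnt : ∀ (m : ℕ) (β : Fin n → ℕ), (∑ i, β i = m) →
    ∃ D : Fin m → Fin n, cnt D = β := by
  intro m
  induction m with
  | zero =>
    intro β hβ
    refine ⟨fun j => j.elim0, funext fun i => ?_⟩
    have : β i = 0 := by
      have := Finset.sum_eq_zero_iff.1 hβ i (Finset.mem_univ i)
      exact this
    simp [cnt, this]
  | succ m ih =>
    intro β hβ
    have hne : ∃ i₀, β i₀ ≠ 0 := by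
      by_contra h
      push_neg at h
      simp [h] at hβ
    obtain ⟨i₀, hi₀⟩ := hne
    set β' := Function.update β i₀ (β i₀ - 1) with hβ'def
    have hsum' : ∑ i, β' i = m := by
      have h1 : ∑ i, β' i = (β i₀ - 1) + ∑ i ∈ Finset.univ.erase i₀, β i := by
        rw [hβ'def, ← Finset.add_sum_erase _ _ (Finset.mem_univ i₀)]
        simp only [Function.update_self]
        congr 1
        exact Finset.sum_congr rfl fun i hi =>
          Function.update_of_ne (Finset.ne_of_mem_erase hi) _ _
      have h2 : ∑ i, β i = β i₀ + ∑ i ∈ Finset.univ.erase i₀, β i :=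
        (Finset.add_sum_erase _ _ (Finset.mem_univ i₀)).symm
      omega
    obtain ⟨D', hD'⟩ := ih β' hsum'
    refine ⟨Fin.cons i₀ D', funext fun i => ?_⟩
    have hsplit : cnt (Fin.cons i₀ D' : Fin (m+1) → Fin n) i
        = (if i₀ = i then 1 else 0) + cnt D' i := by
      rw [cnt, Finset.card_filter, Fin.sum_univ_succ]
      simp only [Fin.cons_zero, Fin.cons_succ]
      rw [cnt, Finset.card_filter]
    rw [hsplit, hD']
    by_cases h : i = i₀
    · subst h
      simp [hβ'def, Function.update_self]
      omega
    · simp [hβ'def, Function.update_of_ne h, Ne.symm h]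

lemma cm_diag {m : ℕ} (u : ContinuousMultilinearMap ℝ (fun _ : Fin m => (Fin n → ℝ)) ℝ)
    (x : Fin n → ℝ) :
    u (fun _ => x) = ∑ D : Fin m → Fin n,
      (∏ j, x (D j)) * u (fun j => Pi.single (D j) 1) := by
  classical
  have hx : x = ∑ i, x i • (Pi.single i 1 : Fin n → ℝ) := by
    funext k
    simp [Pi.single_apply, Finset.sum_ite_eq']
  calc u (fun _ => x) = u (fun _ => ∑ i, x i • (Pi.single i 1 : Fin n → ℝ)) := by rw [← hx]
    _ = ∑ D : Fin m → Fin n, u (fun j => x (D j) • (Pi.single (D j) 1 : Fin n → ℝ)) := by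
        exact u.toMultilinearMap.map_sum (g := fun _ i => x i • (Pi.single i 1 : Fin n → ℝ))
    _ = ∑ D : Fin m → Fin n, (∏ j, x (D j)) * u (fun j => Pi.single (D j) 1) := by
        refine Finset.sum_congr rfl fun D _ => ?_
        have := u.toMultilinearMap.map_smul_univ (fun j => x (D j))
          (fun j => (Pi.single (D j) 1 : Fin n → ℝ))
        simp only [MultilinearMap.toFun_eq_coe, ContinuousMultilinearMap.coe_coe] at this
        rw [this, smul_eq_mul]

def sgn (ε : Fin n → Bool) (i : Fin n) : ℝ := if ε i then 1 else -1

lemma sgn_abs (ε : Fin n → Bool) (i : Fin n) : |sgn ε i| = 1 := by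
  rcases h : ε i with _|_ <;> simp [sgn, h]

lemma sgn_sq (ε : Fin n → Bool) (i : Fin n) : sgn ε i ^ 2 = 1 := by
  rcases h : ε i with _|_ <;> simp [sgn, h]

def Lmap (ε : Fin n → Bool) : (Fin n → ℝ) →L[ℝ] (Fin n → ℝ) :=
  ContinuousLinearMap.pi fun i => sgn ε i • ContinuousLinearMap.proj i

lemma Lmap_apply (ε : Fin n → Bool) (x : Fin n → ℝ) (i : Fin n) :
    Lmap ε x i = sgn ε i * x i := by
  simp [Lmap, ContinuousLinearMap.proj, smul_eq_mul]

lemma Lmap_single (ε : Fin n → Bool) (i : Fin n) :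
    Lmap ε (Pi.single i 1) = sgn ε i • (Pi.single i 1 : Fin n → ℝ) := by
  funext k
  rw [Lmap_apply]
  by_cases h : k = i
  · subst h; simp
  · simp [Pi.single_apply, h]

lemma Lmap_nnnorm (ε : Fin n → Bool) (x : Fin n → ℝ) : ‖Lmap ε x‖₊ = ‖x‖₊ := by
  rw [Pi.nnnorm_def, Pi.nnnorm_def]
  congr 1
  funext i
  have : ‖Lmap ε x i‖ = ‖x i‖ := by
    rw [Lmap_apply, norm_mul, Real.norm_eq_abs (sgn ε i), sgn_abs, one_mul]
  ext
  simpa using this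

/-- symmetrized power series -/
def ptil (p : FormalMultilinearSeries ℝ (Fin n → ℝ) ℝ) :
    FormalMultilinearSeries ℝ (Fin n → ℝ) ℝ :=
  fun m => ((2:ℝ)^n)⁻¹ • ∑ ε : Fin n → Bool, (p m).compContinuousLinearMap (fun _ => Lmap ε)

lemma ptil_apply (p : FormalMultilinearSeries ℝ (Fin n → ℝ) ℝ) (m : ℕ)
    (v : Fin m → (Fin n → ℝ)) :
    ptil p m v = ((2:ℝ)^n)⁻¹ * ∑ ε : Fin n → Bool, p m (fun j => Lmap ε (v j)) := by
  simp [ptil, smul_eq_mul, ContinuousMultilinearMap.sum_apply]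

def ctil (p : FormalMultilinearSeries ℝ (Fin n → ℝ) ℝ) {m : ℕ} (D : Fin m → Fin n) : ℝ :=
  ptil p m (fun j => Pi.single (D j) 1)

lemma ctil_eq (p : FormalMultilinearSeries ℝ (Fin n → ℝ) ℝ) {m : ℕ} (D : Fin m → Fin n) :
    ctil p D = if (∀ i, Even (cnt D i)) then p m (fun j => Pi.single (D j) 1) else 0 := by
  classical
  rw [ctil, ptil_apply]
  have hterm : ∀ ε : Fin n → Bool, p m (fun j => Lmap ε ((Pi.single (D j) 1 : Fin n → ℝ)))
      = (∏ i, sgn ε i ^ cnt D i) * p m (fun j => (Pi.single (D j) 1 : Fin n → ℝ)) := by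
    intro ε
    have h1 : (fun j => Lmap ε ((Pi.single (D j) 1 : Fin n → ℝ)))
        = fun j => sgn ε (D j) • (Pi.single (D j) 1 : Fin n → ℝ) := by
      funext j; exact Lmap_single ε (D j)
    rw [h1]
    have := (p m).toMultilinearMap.map_smul_univ (fun j => sgn ε (D j))
      (fun j => (Pi.single (D j) 1 : Fin n → ℝ))
    simp only [MultilinearMap.toFun_eq_coe, ContinuousMultilinearMap.coe_coe] at this
    rw [this, smul_eq_mul, prod_cnt (fun i => sgn ε i) D]
  simp only [hterm, ← Finset.sum_mul]
  have hsum : ∑ ε : Fin n → Bool, ∏ i, sgn ε i ^ cnt D i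
      = ∏ i : Fin n, ((1:ℝ) ^ cnt D i + (-1) ^ cnt D i) := by
    have hpf := Finset.sum_prod_piFinset (Finset.univ : Finset Bool)
      (fun (i : Fin n) (b : Bool) => (if b then (1:ℝ) else -1) ^ cnt D i)
    rw [Fintype.piFinset_univ] at hpf
    calc ∑ ε : Fin n → Bool, ∏ i, sgn ε i ^ cnt D i
        = ∏ i : Fin n, ∑ b : Bool, (if b then (1:ℝ) else -1) ^ cnt D i := hpf
      _ = ∏ i : Fin n, ((1:ℝ) ^ cnt D i + (-1) ^ cnt D i) := by
          refine Finset.prod_congr rfl fun i _ => ?_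
          rw [Fintype.sum_bool]
          simp
  rw [hsum]
  by_cases h : ∀ i, Even (cnt D i)
  · have : ∏ i : Fin n, ((1:ℝ) ^ cnt D i + (-1) ^ cnt D i) = 2^n := by
      rw [Finset.prod_congr rfl (g := fun _ => (2:ℝ)) (fun i _ => by
        rw [one_pow, (h i).neg_one_pow]; norm_num)]
      simp
    rw [this, if_pos h]
    field_simp
  · push_neg at h
    obtain ⟨i₀, hi₀⟩ := h
    have : ∏ i : Fin n, ((1:ℝ) ^ cnt D i + (-1) ^ cnt D i) = 0 := by
      apply Finset.prod_eq_zero (Finset.mem_univ i₀)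
      rw [one_pow, Odd.neg_one_pow (Nat.not_even_iff_odd.1 hi₀)]
      ring
    rw [this, if_neg (by push_neg; exact ⟨i₀, hi₀⟩)]
    ring

def Nfib (m : ℕ) (β : Fin n → ℕ) : ℕ :=
  (Finset.univ.filter fun d : Fin m → Fin n => cnt d = β).card

/-- coefficients of the halved series. -/
def Wc (p : FormalMultilinearSeries ℝ (Fin n → ℝ) ℝ) (m : ℕ) (β : Fin n → ℕ) : ℝ :=
  (∑ D ∈ Finset.univ.filter fun D : Fin (2*m) → Fin n => cnt D = (fun i => 2 * β i),
    ctil p D) / (Nfib m β : ℝ)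

/-- the candidate power series for `F`. -/
def Pser (p : FormalMultilinearSeries ℝ (Fin n → ℝ) ℝ) :
    FormalMultilinearSeries ℝ (Fin n → ℝ) ℝ :=
  fun m => ∑ d : Fin m → Fin n, Wc p m (cnt d) •
    ((ContinuousMultilinearMap.mkPiAlgebra ℝ (Fin m) ℝ).compContinuousLinearMap
      fun j => ContinuousLinearMap.proj (d j))

lemma Pser_apply (p : FormalMultilinearSeries ℝ (Fin n → ℝ) ℝ) (m : ℕ)
    (v : Fin m → (Fin n → ℝ)) :
    Pser p m v = ∑ d : Fin m → Fin n, Wc p m (cnt d) * ∏ j, v j (d j) := by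
  simp [Pser, ContinuousMultilinearMap.sum_apply, smul_eq_mul]

/-- the key degree-by-degree identity. -/
lemma Pser_diag_sq (p : FormalMultilinearSeries ℝ (Fin n → ℝ) ℝ) (m : ℕ) (x : Fin n → ℝ) :
    Pser p m (fun _ => fun i => x i ^ 2) = ptil p (2*m) (fun _ => x) := by
  classical
  -- T α is the total contribution of monomial α to the degree 2m part
  set T : (Fin n → ℕ) → ℝ := fun α =>
    (∑ D ∈ Finset.univ.filter fun D : Fin (2*m) → Fin n => cnt D = α, ctil p D)
      * ∏ i, x i ^ α i with hT
  have hLHS : Pser p m (fun _ => fun i => x i ^ 2)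
      = ∑ β ∈ (Finset.univ.image fun d : Fin m → Fin n => cnt d), T (fun i => 2 * β i) := by
    rw [Pser_apply]
    have h1 : ∀ d : Fin m → Fin n, (∏ j, (fun i => x i ^ 2) (d j)) = ∏ i, x i ^ (2 * cnt d i) := by
      intro d
      rw [prod_cnt (fun i => x i ^ 2) d]
      refine Finset.prod_congr rfl fun i _ => ?_
      rw [← pow_mul]
    have h2 : ∀ d : Fin m → Fin n, Wc p m (cnt d) * ∏ j, (fun i => x i ^ 2) (d j)
        = (fun β => Wc p m β * ∏ i, x i ^ (2 * β i)) (cnt d) := by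
      intro d; rw [h1]
    rw [Finset.sum_congr rfl fun d _ => h2 d]
    rw [← Finset.sum_fiberwise_of_maps_to' (g := fun d : Fin m → Fin n => cnt d)
      (t := Finset.univ.image fun d : Fin m → Fin n => cnt d)
      (fun d _ => Finset.mem_image_of_mem _ (Finset.mem_univ d))
      (fun β => Wc p m β * ∏ i, x i ^ (2 * β i))]
    refine Finset.sum_congr rfl fun β hβ => ?_
    rw [Finset.sum_const]
    have hN : ((Nfib m β : ℝ)) ≠ 0 := by
      obtain ⟨d, _, hd⟩ := Finset.mem_image.1 hβ
      have : 0 < Nfib m β := Finset.card_pos.2 ⟨d, Finset.mem_filter.2 ⟨Finset.mem_univ _, hd⟩⟩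
      exact_mod_cast this.ne'
    simp only [hT, nsmul_eq_mul]
    have hNN : ((Finset.univ.filter fun d : Fin m → Fin n => cnt d = β).card : ℝ)
        = (Nfib m β : ℝ) := rfl
    rw [hNN, Wc]
    generalize (∑ D ∈ Finset.univ.filter fun D : Fin (2*m) → Fin n =>
      cnt D = (fun i => 2 * β i), ctil p D) = S
    field_simp
  have hRHS : ptil p (2*m) (fun _ => x)
      = ∑ α ∈ (Finset.univ.image fun D : Fin (2*m) → Fin n => cnt D), T α := by
    rw [cm_diag (ptil p (2*m)) x]
    have h1 : ∀ D : Fin (2*m) → Fin n, (∏ j, x (D j)) * ptil p (2*m) (fun j => Pi.single (D j) 1)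
        = ctil p D * ∏ i, x i ^ cnt D i := by
      intro D
      rw [prod_cnt x D, mul_comm, ctil]
    rw [Finset.sum_congr rfl fun D _ => h1 D]
    rw [← Finset.sum_fiberwise_of_maps_to (g := fun D : Fin (2*m) → Fin n => cnt D)
      (t := Finset.univ.image fun D : Fin (2*m) → Fin n => cnt D)
      (fun D _ => Finset.mem_image_of_mem _ (Finset.mem_univ D))
      (fun D => ctil p D * ∏ i, x i ^ cnt D i)]
    refine Finset.sum_congr rfl fun α hα => ?_
    simp only [hT]
    rw [Finset.sum_mul]
    refine Finset.sum_congr rfl fun D hD => ?_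
    rw [(Finset.mem_filter.1 hD).2]
  rw [hLHS, hRHS]
  -- now compare the two index sets
  have hinj : ∀ β1 ∈ (Finset.univ.image fun d : Fin m → Fin n => cnt d),
      ∀ β2 ∈ (Finset.univ.image fun d : Fin m → Fin n => cnt d),
      (fun β : Fin n → ℕ => fun i => 2 * β i) β1
        = (fun β : Fin n → ℕ => fun i => 2 * β i) β2 → β1 = β2 := by
    intro β1 _ β2 _ h
    funext i
    have := congrFun h i
    simp only at this
    omega
  have hreidx := Finset.sum_image (s := Finset.univ.image fun d : Fin m → Fin n => cnt d)
    (g := fun β : Fin n → ℕ => fun i => 2 * β i) (f := T) hinj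
  rw [← hreidx]
  apply Finset.sum_subset
  · -- doubled m-counts are 2m-counts
    intro α hα
    obtain ⟨β, hβ, hβα⟩ := Finset.mem_image.1 hα
    obtain ⟨d, _, hd⟩ := Finset.mem_image.1 hβ
    obtain ⟨D, hD⟩ := exists_cnt (2*m) α (by
      subst hβα; subst hd
      simp only
      rw [← Finset.mul_sum, sum_cnt])
    exact Finset.mem_image.2 ⟨D, Finset.mem_univ D, hD⟩
  · -- terms outside vanish
    intro α hα hnot
    have : ∀ D ∈ Finset.univ.filter fun D : Fin (2*m) → Fin n => cnt D = α,
        ctil p D = 0 := by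
      intro D hD
      have hcnt : cnt D = α := (Finset.mem_filter.1 hD).2
      by_contra hne
      have heven : ∀ i, Even (cnt D i) := by
        by_contra hh
        rw [ctil_eq, if_neg hh] at hne
        exact hne rfl
      -- build the half function
      have hsum : ∑ i, cnt D i / 2 = m := by
        have h2m : ∑ i, cnt D i = 2*m := sum_cnt D
        have heq : ∑ i, cnt D i = ∑ i, 2 * (cnt D i / 2) := by
          refine Finset.sum_congr rfl fun i _ => ?_
          exact (Nat.two_mul_div_two_of_even (heven i)).symm
        rw [heq, ← Finset.mul_sum] at h2m
        omega
      obtain ⟨d, hd⟩ := exists_cnt m (fun i => cnt D i / 2) hsum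
      apply hnot
      refine Finset.mem_image.2 ⟨cnt d, Finset.mem_image_of_mem _ (Finset.mem_univ d), ?_⟩
      funext i
      rw [hd]
      have := Nat.two_mul_div_two_of_even (heven i)
      rw [this, ← hcnt]
    simp only [hT]
    rw [Finset.sum_eq_zero this, zero_mul]

lemma ctil_le (p : FormalMultilinearSeries ℝ (Fin n → ℝ) ℝ) {m : ℕ} (D : Fin m → Fin n) :
    |ctil p D| ≤ ‖p m‖ := by
  rw [ctil_eq]
  split
  · calc |p m (fun j => Pi.single (D j) 1)|
        ≤ ‖p m‖ * ∏ j, ‖(Pi.single (D j) 1 : Fin n → ℝ)‖ := (p m).le_opNorm _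
      _ = ‖p m‖ := by
          simp [Pi.norm_single]
  · simp [norm_nonneg]

lemma Wc_le (p : FormalMultilinearSeries ℝ (Fin n → ℝ) ℝ) (m : ℕ) (β : Fin n → ℕ) :
    |Wc p m β| ≤ (n^(2*m) : ℝ) * ‖p (2*m)‖ := by
  have hRHS : (0:ℝ) ≤ (n^(2*m) : ℝ) * ‖p (2*m)‖ := by positivity
  rw [Wc]
  rcases Nat.eq_zero_or_pos (Nfib m β) with h | h
  · rw [h]; simpa using hRHS
  · have h1 : (1:ℝ) ≤ (Nfib m β : ℝ) := by exact_mod_cast h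
    rw [abs_div, abs_of_nonneg (by positivity : (0:ℝ) ≤ (Nfib m β : ℝ))]
    calc |∑ D ∈ Finset.univ.filter fun D : Fin (2*m) → Fin n => cnt D = (fun i => 2 * β i),
          ctil p D| / (Nfib m β : ℝ)
        ≤ |∑ D ∈ Finset.univ.filter fun D : Fin (2*m) → Fin n => cnt D = (fun i => 2 * β i),
          ctil p D| := div_le_self (abs_nonneg _) h1
      _ ≤ ∑ D ∈ Finset.univ.filter fun D : Fin (2*m) → Fin n => cnt D = (fun i => 2 * β i),
          |ctil p D| := Finset.abs_sum_le_sum_abs _ _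
      _ ≤ ∑ D : Fin (2*m) → Fin n, |ctil p D| := by
          apply Finset.sum_le_sum_of_subset_of_nonneg (Finset.filter_subset _ _)
          intro D _ _; exact abs_nonneg _
      _ ≤ (Finset.univ : Finset (Fin (2*m) → Fin n)).card • ‖p (2*m)‖ :=
          Finset.sum_le_card_nsmul _ _ _ (fun D _ => ctil_le p D)
      _ = (n^(2*m) : ℝ) * ‖p (2*m)‖ := by
          rw [nsmul_eq_mul, Finset.card_univ, Fintype.card_fun]
          simp

set_option maxHeartbeats 1000000 in
lemma Pser_norm (p : FormalMultilinearSeries ℝ (Fin n → ℝ) ℝ) (m : ℕ) :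
    ‖Pser p m‖ ≤ (n^m : ℝ) * ((n^(2*m) : ℝ) * ‖p (2*m)‖) := by
  have hQ : ∀ d : Fin m → Fin n,
      ‖((ContinuousMultilinearMap.mkPiAlgebra ℝ (Fin m) ℝ).compContinuousLinearMap
        (fun j => ContinuousLinearMap.proj (d j)) :
        ContinuousMultilinearMap ℝ (fun _ : Fin m => (Fin n → ℝ)) ℝ)‖ ≤ 1 := by
    intro d
    apply ContinuousMultilinearMap.opNorm_le_bound zero_le_one
    intro v
    rw [one_mul]
    simp only [ContinuousMultilinearMap.compContinuousLinearMap_apply,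
      ContinuousMultilinearMap.mkPiAlgebra_apply, ContinuousLinearMap.proj_apply]
    calc ‖∏ j, v j (d j)‖ = ∏ j, |v j (d j)| := by
          rw [Real.norm_eq_abs, Finset.abs_prod]
      _ ≤ ∏ j, ‖v j‖ := by
          apply Finset.prod_le_prod (fun j _ => abs_nonneg _)
          intro j _
          exact norm_le_pi_norm (v j) (d j)
  have h0 : ‖Pser p m‖ ≤ ∑ d : Fin m → Fin n, ‖Wc p m (cnt d) •
        (((ContinuousMultilinearMap.mkPiAlgebra ℝ (Fin m) ℝ).compContinuousLinearMap
          fun j => ContinuousLinearMap.proj (d j)) :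
          ContinuousMultilinearMap ℝ (fun _ : Fin m => (Fin n → ℝ)) ℝ)‖ := by
    simp only [Pser]
    exact norm_sum_le _ _
  calc ‖Pser p m‖ ≤ ∑ d : Fin m → Fin n, ‖Wc p m (cnt d) •
        (((ContinuousMultilinearMap.mkPiAlgebra ℝ (Fin m) ℝ).compContinuousLinearMap
          fun j => ContinuousLinearMap.proj (d j)) :
          ContinuousMultilinearMap ℝ (fun _ : Fin m => (Fin n → ℝ)) ℝ)‖ := h0
    _ ≤ ∑ _d : Fin m → Fin n, (n^(2*m) : ℝ) * ‖p (2*m)‖ := by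
        apply Finset.sum_le_sum
        intro d _
        refine (norm_smul_le (Wc p m (cnt d))
          (((ContinuousMultilinearMap.mkPiAlgebra ℝ (Fin m) ℝ).compContinuousLinearMap
          fun j => ContinuousLinearMap.proj (d j)) :
          ContinuousMultilinearMap ℝ (fun _ : Fin m => (Fin n → ℝ)) ℝ)).trans ?_
        rw [Real.norm_eq_abs]
        calc |Wc p m (cnt d)| * ‖(((ContinuousMultilinearMap.mkPiAlgebra ℝ (Fin m) ℝ).compContinuousLinearMap
          fun j => ContinuousLinearMap.proj (d j)) :
          ContinuousMultilinearMap ℝ (fun _ : Fin m => (Fin n → ℝ)) ℝ)‖ ≤ ((n^(2*m) : ℝ) * ‖p (2*m)‖) * 1 :=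
              mul_le_mul (Wc_le p m (cnt d)) (hQ d) (norm_nonneg _) (by positivity)
          _ = (n^(2*m) : ℝ) * ‖p (2*m)‖ := mul_one _
    _ = (n^m : ℝ) * ((n^(2*m) : ℝ) * ‖p (2*m)‖) := by
        rw [Finset.sum_const, nsmul_eq_mul, Finset.card_univ, Fintype.card_fun]
        simp

lemma ptil_odd_vanish (p : FormalMultilinearSeries ℝ (Fin n → ℝ) ℝ) {M : ℕ} (hM : ¬ Even M)
    (x : Fin n → ℝ) : ptil p M (fun _ => x) = 0 := by
  rw [cm_diag (ptil p M) x]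
  apply Finset.sum_eq_zero
  intro D _
  have : ctil p D = 0 := by
    rw [ctil_eq, if_neg]
    intro h
    apply hM
    rw [← sum_cnt D]
    exact Finset.even_sum _ (fun i _ => h i)
  rw [ctil] at this
  rw [this, mul_zero]

lemma hasSum_ptil {g : (Fin n → ℝ) → ℝ} {p : FormalMultilinearSeries ℝ (Fin n → ℝ) ℝ}
    {rb : ENNReal} (hg : HasFPowerSeriesOnBall g p 0 rb)
    (hinv : ∀ (ε : Fin n → Bool) (x' : Fin n → ℝ), g (Lmap ε x') = g x')
    {x : Fin n → ℝ} (hx : (‖x‖₊ : ENNReal) < rb) :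
    HasSum (fun m => ptil p m (fun _ => x)) (g x) := by
  have hL : ∀ ε : Fin n → Bool, HasSum (fun m => p m (fun _ => Lmap ε x)) (g x) := by
    intro ε
    have hx' : Lmap ε x ∈ Metric.eball (0 : Fin n → ℝ) rb := by
      rw [mem_emetric_ball_zero_iff, enorm_eq_nnnorm, Lmap_nnnorm]
      exact hx
    have := hg.hasSum hx'
    rwa [zero_add, hinv] at this
  have hL' : ∀ ε : Fin n → Bool,
      HasSum (fun m => ((2:ℝ)^n)⁻¹ • p m (fun _ => Lmap ε x)) (((2:ℝ)^n)⁻¹ • g x) :=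
    fun ε => (hL ε).const_smul _
  have hsum := hasSum_sum (s := (Finset.univ : Finset (Fin n → Bool)))
    (f := fun ε m => ((2:ℝ)^n)⁻¹ • p m (fun _ => Lmap ε x))
    (a := fun _ => ((2:ℝ)^n)⁻¹ • g x) (fun ε _ => hL' ε)
  have h1 : (∑ _ε : Fin n → Bool, ((2:ℝ)^n)⁻¹ • g x) = g x := by
    rw [Finset.sum_const, Finset.card_univ, Fintype.card_fun]
    simp only [Fintype.card_bool, Fintype.card_fin, nsmul_eq_mul, smul_eq_mul, ← mul_assoc]
    push_cast
    field_simp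
  have h2 : ∀ m, (∑ ε : Fin n → Bool, ((2:ℝ)^n)⁻¹ • p m (fun _ => Lmap ε x))
      = ptil p m (fun _ => x) := by
    intro m
    rw [ptil]
    simp only [ContinuousMultilinearMap.smul_apply, ContinuousMultilinearMap.sum_apply,
      ContinuousMultilinearMap.compContinuousLinearMap_apply, smul_eq_mul]
    rw [Finset.mul_sum]
  rw [h1] at hsum
  convert hsum using 1; funext m; exact (h2 m).symm

/-- if `f ∘ q` is real analytic on `I_r = (−r,r)ⁿ`, where `q` squares each
coordinate, then `f` has a real analytic extension near `0` agreeing with `f` on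
`U ∩ q(I_r)`. -/
theorem stmt5 {n : ℕ} (r : ℝ) (hr : 0 < r)
    (q : (Fin n → ℝ) → (Fin n → ℝ)) (hq : ∀ x i, q x i = (x i) ^ 2)
    (f : (Fin n → ℝ) → ℝ)
    (hf : ∀ x ∈ {x : Fin n → ℝ | ∀ i, x i ∈ Set.Ioo (-r) r}, AnalyticAt ℝ (f ∘ q) x) :
    ∃ U : Set (Fin n → ℝ), IsOpen U ∧ (0 : Fin n → ℝ) ∈ U ∧
      ∃ F : (Fin n → ℝ) → ℝ, (∀ y ∈ U, AnalyticAt ℝ F y) ∧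
        ∀ y ∈ U ∩ (q '' {x : Fin n → ℝ | ∀ i, x i ∈ Set.Ioo (-r) r}), F y = f y := by
  classical
  have h0mem : (0 : Fin n → ℝ) ∈ {x : Fin n → ℝ | ∀ i, x i ∈ Set.Ioo (-r) r} := by
    intro i
    exact ⟨neg_lt_zero.2 hr, hr⟩
  obtain ⟨p, hp⟩ := hf 0 h0mem
  obtain ⟨rb, hgball⟩ := hp
  have hqL : ∀ (ε : Fin n → Bool) (x : Fin n → ℝ), q (Lmap ε x) = q x := by
    intro ε x; funext i
    rw [hq, hq, Lmap_apply, mul_pow, sgn_sq, one_mul]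
  have hinv : ∀ (ε : Fin n → Bool) (x : Fin n → ℝ), (f ∘ q) (Lmap ε x) = (f ∘ q) x := by
    intro ε x
    simp only [Function.comp_apply, hqL]
  obtain ⟨t, ht0, htrb⟩ := ENNReal.lt_iff_exists_nnreal_btwn.1 hgball.r_pos
  have ht0N : 0 < t := by exact_mod_cast ht0
  have ht0' : (0:ℝ) < (t:ℝ) := ht0N
  have htrad : (t : ℝ≥0∞) < p.radius := lt_of_lt_of_le htrb hgball.r_le
  obtain ⟨C, hC0, hCb⟩ := p.norm_mul_pow_le_of_lt_radius htrad
  set tR : ℝ := (t : ℝ) with htR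
  set ρ : ℝ := tR^2 / ((n:ℝ)+1)^3 with hρ
  have hρ0 : 0 < ρ := by positivity
  -- bound for the radius of Pser
  have hbound : ∀ m, ‖Pser p m‖ * ρ^m ≤ C := by
    intro m
    have h1 : ‖Pser p m‖ ≤ (n^m : ℝ) * ((n^(2*m):ℝ) * ‖p (2*m)‖) := Pser_norm p m
    have h2 : ‖p (2*m)‖ * tR^(2*m) ≤ C := hCb (2*m)
    have hρm : ρ^m = tR^(2*m) / ((n:ℝ)+1)^(3*m) := by
      rw [hρ, div_pow, ← pow_mul, ← pow_mul]
    have hn3 : (n:ℝ)^(3*m) ≤ ((n:ℝ)+1)^(3*m) := by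
      apply pow_le_pow_left₀ (by positivity)
      linarith
    have hden : (0:ℝ) < ((n:ℝ)+1)^(3*m) := by positivity
    calc ‖Pser p m‖ * ρ^m ≤ ((n^m : ℝ) * ((n^(2*m):ℝ) * ‖p (2*m)‖)) * ρ^m := by
          apply mul_le_mul_of_nonneg_right h1 (by positivity)
      _ = ((n:ℝ)^(3*m) / ((n:ℝ)+1)^(3*m)) * (‖p (2*m)‖ * tR^(2*m)) := by
          rw [hρm]
          have : (n^m : ℝ) * (n^(2*m) : ℝ) = (n:ℝ)^(3*m) := by
            rw [← pow_add]; ring_nf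
          field_simp
          ring_nf
      _ ≤ 1 * C := by
          apply mul_le_mul _ h2 (by positivity) zero_le_one
          rw [div_le_one hden]
          exact hn3
      _ = C := one_mul C
  set ρN : ℝ≥0 := Real.toNNReal ρ with hρN
  have hρNc : (ρN : ℝ) = ρ := Real.coe_toNNReal _ hρ0.le
  have hρN0 : 0 < ρN := Real.toNNReal_pos.2 hρ0
  have hradius : (ρN : ℝ≥0∞) ≤ (Pser p).radius :=
    (Pser p).le_radius_of_bound C (fun m => by rw [hρNc]; exact hbound m)
  have hrad0 : 0 < (Pser p).radius :=
    lt_of_lt_of_le (by exact_mod_cast hρN0 : (0:ℝ≥0∞) < (ρN : ℝ≥0∞)) hradius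
  set δ : ℝ := ρ/2 with hδ
  have hδ0 : 0 < δ := by positivity
  have hmem_rad : ∀ y : Fin n → ℝ, ‖y‖ < δ →
      y ∈ Metric.eball (0 : Fin n → ℝ) (Pser p).radius := by
    intro y hy
    rw [mem_emetric_ball_zero_iff]
    have h1 : ‖y‖ < ρ := lt_of_lt_of_le hy (by linarith)
    have h2 : (‖y‖₊ : ℝ≥0∞) < (ρN : ℝ≥0∞) := by
      rw [ENNReal.coe_lt_coe, ← NNReal.coe_lt_coe, hρNc]
      simpa using h1
    exact lt_of_lt_of_le h2 hradius
  refine ⟨Metric.ball 0 δ, Metric.isOpen_ball, Metric.mem_ball_self hδ0, (Pser p).sum, ?_, ?_⟩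
  · intro y hy
    exact ((Pser p).hasFPowerSeriesOnBall hrad0).analyticAt_of_mem
      (hmem_rad y (by simpa [Metric.mem_ball, dist_zero_right] using hy))
  · rintro y ⟨hyU, x₀, hx₀, rfl⟩
    have hyn : ‖q x₀‖ < δ := by
      simpa [Metric.mem_ball, dist_zero_right] using hyU
    have hynn : ∀ i, 0 ≤ q x₀ i := fun i => by rw [hq]; positivity
    set x : Fin n → ℝ := fun i => Real.sqrt (q x₀ i) with hx
    have hyx : (fun i => x i ^ 2) = q x₀ := by
      funext i
      rw [hx]
      exact Real.sq_sqrt (hynn i)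
    have hδt : δ ≤ tR^2 := by
      rw [hδ, hρ]
      have h1 : ((n:ℝ)+1)^3 ≥ 1 := one_le_pow₀ (by linarith [Nat.cast_nonneg (α := ℝ) n])
      have h2 : tR^2 / ((n:ℝ)+1)^3 ≤ tR^2 := by
        apply div_le_self (by positivity) h1
      linarith
    have hxt : ‖x‖ < tR := by
      rw [pi_norm_lt_iff ht0']
      intro i
      rw [Real.norm_eq_abs, abs_of_nonneg (Real.sqrt_nonneg _)]
      rw [Real.sqrt_lt' ht0']
      calc q x₀ i ≤ |q x₀ i| := le_abs_self _
        _ ≤ ‖q x₀‖ := norm_le_pi_norm (q x₀) i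
        _ < δ := hyn
        _ ≤ tR^2 := hδt
    have hx_ball : (‖x‖₊ : ℝ≥0∞) < rb := by
      refine lt_trans ?_ htrb
      rw [ENNReal.coe_lt_coe, ← NNReal.coe_lt_coe]
      simpa using hxt
    have hsum_g : HasSum (fun M => ptil p M (fun _ => x)) ((f ∘ q) x) :=
      hasSum_ptil hgball hinv hx_ball
    have hsum_g2 : HasSum (fun m => ptil p (2*m) (fun _ => x)) ((f ∘ q) x) := by
      have hvan : ∀ M, M ∉ Set.range (fun m => 2*m) →
          ptil p M (fun _ => x) = 0 := by
        intro M hM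
        refine ptil_odd_vanish p (fun hEv => ?_) x
        obtain ⟨k, hk⟩ := hEv
        refine hM ⟨k, ?_⟩
        show 2 * k = M
        omega
      refine (Function.Injective.hasSum_iff (fun a b h => ?_) hvan).2 hsum_g
      have h' : 2 * a = 2 * b := h
      omega
    have hsum_F : HasSum (fun m => Pser p m (fun _ => q x₀)) ((Pser p).sum (q x₀)) :=
      (Pser p).hasSum (hmem_rad _ hyn)
    have hterm : (fun m => Pser p m (fun _ => q x₀)) = fun m => ptil p (2*m) (fun _ => x) := by
      funext m
      rw [← hyx]
      exact Pser_diag_sq p m x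
    rw [hterm] at hsum_F
    have hFy : (Pser p).sum (q x₀) = (f ∘ q) x := hsum_F.unique hsum_g2
    have hgq : (f ∘ q) x = f (q x₀) := by
      simp only [Function.comp_apply]
      congr 1
      funext i
      rw [hq, ← hyx]
    rw [hFy, hgq]

end Stmt5Aux
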